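/- Let f(S) = min(|S|, k) on subsets of N = {1,...,n}, and let Ef(q) denote its multilinear extension, i.e., the expectation of f(S) when each element i is independently included in S with probability q_i. Among all probability vectors q ∈ [0,1]^n with Σ_i q_i = k, the vector with all coordinates equal to k/n minimizes Ef(q). -/

import Mathlib

open Finset

/-- Multilinear extension of the `k`-uniform rank function `S ↦ min(|S|, k)`. -/
noncomputable def multilinearRank (n k : ℕ) (q : Fin n → ℝ) : ℝ :=
  ∑ S : Finset (Fin n),
    (min S.card k : ℕ) * ((∏ i ∈ S, q i) * ∏ i ∈ Sᶜ, (1 - q i))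

lemma mr_split (n k : ℕ) (i j : Fin n) (hij : i ≠ j) (q : Fin n → ℝ) :
    multilinearRank n k q =
    ∑ T ∈ ((univ : Finset (Fin n)) \ {i, j}).powerset,
      ((∏ t ∈ T, q t) * ∏ t ∈ ((univ : Finset (Fin n)) \ {i, j}) \ T, (1 - q t)) *
      ( (min T.card k : ℕ) * ((1 - q i) * (1 - q j))
      + (min (T.card + 1) k : ℕ) * (q j * (1 - q i))
      + (min (T.card + 1) k : ℕ) * (q i * (1 - q j))
      + (min (T.card + 2) k : ℕ) * (q i * q j) ) := by
  classical
  set s : Finset (Fin n) := (univ : Finset (Fin n)) \ {i, j} with hs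
  have his : i ∉ s := by simp [hs]
  have hjs : j ∉ s := by simp [hs]
  have hi' : i ∉ insert j s := by simp [hs, hij]
  have huniv : (univ : Finset (Fin n)) = insert i (insert j s) := by
    ext t
    simp only [hs, mem_insert, mem_sdiff, mem_univ, mem_insert, mem_singleton, true_and]
    tauto
  have h1 : multilinearRank n k q
      = ∑ S ∈ (insert i (insert j s)).powerset,
          (min S.card k : ℕ) * ((∏ t ∈ S, q t) * ∏ t ∈ Sᶜ, (1 - q t)) := by
    rw [multilinearRank, ← huniv, powerset_univ]
  rw [h1, Finset.sum_powerset_insert hi',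
      Finset.sum_powerset_insert hjs, Finset.sum_powerset_insert hjs,
      ← Finset.sum_add_distrib, ← Finset.sum_add_distrib, ← Finset.sum_add_distrib]
  refine Finset.sum_congr rfl ?_
  intro T hT
  rw [mem_powerset] at hT
  have hiT : i ∉ T := fun h => his (hT h)
  have hjT : j ∉ T := fun h => hjs (hT h)
  have hiT' : i ∉ insert j T := by simp [hij, hiT]
  have hjsT : j ∉ s \ T := by simp [hjs]
  have hisT : i ∉ s \ T := by simp [his]
  have hisT' : i ∉ insert j (s \ T) := by simp [hij, hisT]
  -- complements
  have hc0 : Tᶜ = insert i (insert j (s \ T)) := by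
    ext t
    simp only [mem_compl, mem_insert, mem_sdiff, hs, mem_univ, true_and, mem_insert,
      mem_singleton]
    constructor
    · intro h
      by_cases hti : t = i
      · exact Or.inl hti
      · by_cases htj : t = j
        · exact Or.inr (Or.inl htj)
        · exact Or.inr (Or.inr ⟨fun hh => hh.elim hti htj, h⟩)
    · rintro (rfl | rfl | ⟨-, h⟩) <;> [exact hiT; exact hjT; exact h]
  have hcj : (insert j T)ᶜ = insert i (s \ T) := by
    ext t
    simp only [mem_compl, mem_insert, mem_sdiff, hs, mem_univ, true_and, mem_singleton]
    constructor
    · intro h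
      push_neg at h
      by_cases hti : t = i
      · exact Or.inl hti
      · exact Or.inr ⟨fun hh => hh.elim hti h.1, h.2⟩
    · rintro (rfl | ⟨h1, h2⟩)
      · simp [hij, hiT]
      · push_neg
        exact ⟨fun hh => h1 (Or.inr hh), h2⟩
  have hci : (insert i T)ᶜ = insert j (s \ T) := by
    ext t
    simp only [mem_compl, mem_insert, mem_sdiff, hs, mem_univ, true_and, mem_singleton]
    constructor
    · intro h
      push_neg at h
      by_cases htj : t = j
      · exact Or.inl htj
      · exact Or.inr ⟨fun hh => hh.elim h.1 htj, h.2⟩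
    · rintro (rfl | ⟨h1, h2⟩)
      · simp [Ne.symm hij, hjT]
      · push_neg
        exact ⟨fun hh => h1 (Or.inl hh), h2⟩
  have hcij : (insert i (insert j T))ᶜ = s \ T := by
    ext t
    simp only [mem_compl, mem_insert, mem_sdiff, hs, mem_univ, true_and, mem_singleton]
    constructor
    · intro h
      push_neg at h
      exact ⟨fun hh => hh.elim h.1 h.2.1, h.2.2⟩
    · rintro ⟨h1, h2⟩
      push_neg
      exact ⟨fun hh => h1 (Or.inl hh), fun hh => h1 (Or.inr hh), h2⟩
  have hcard1 : (insert j T).card = T.card + 1 := card_insert_of_notMem hjT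
  have hcard2 : (insert i T).card = T.card + 1 := card_insert_of_notMem hiT
  have hcard3 : (insert i (insert j T)).card = T.card + 2 := by
    rw [card_insert_of_notMem hiT', hcard1]
  rw [hc0, hcj, hci, hcij, hcard1, hcard2, hcard3]
  simp only [prod_insert hisT', prod_insert hjsT, prod_insert hisT,
    prod_insert hiT', prod_insert hjT, prod_insert hiT]
  ring


lemma key_ineq (a b d w x y x' y' : ℝ) (hw : 0 ≤ w) (habd : a + d ≤ 2 * b)
    (hs : x' + y' = x + y) (hp : x * y ≤ x' * y') :
    w * (a * ((1 - x') * (1 - y')) + b * (y' * (1 - x')) + b * (x' * (1 - y')) + d * (x' * y'))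
      ≤ w * (a * ((1 - x) * (1 - y)) + b * (y * (1 - x)) + b * (x * (1 - y)) + d * (x * y)) := by
  have h0 : 0 ≤ (2 * b - a - d) * (w * (x' * y' - x * y)) :=
    mul_nonneg (by linarith) (mul_nonneg hw (by linarith))
  have hEq : w * (a * ((1 - x) * (1 - y)) + b * (y * (1 - x)) + b * (x * (1 - y)) + d * (x * y))
      - w * (a * ((1 - x') * (1 - y')) + b * (y' * (1 - x')) + b * (x' * (1 - y')) + d * (x' * y'))
      = (2 * b - a - d) * (w * (x' * y' - x * y))
        + ((b - a) * w) * ((x + y) - (x' + y')) := by ring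
  rw [hs] at hEq
  simp at hEq
  linarith

lemma mr_transfer (n k : ℕ) (i j : Fin n) (hij : i ≠ j) (q q' : Fin n → ℝ)
    (hoff : ∀ t, t ≠ i → t ≠ j → q' t = q t)
    (h0 : ∀ t, 0 ≤ q t) (h1 : ∀ t, q t ≤ 1)
    (hsum : q' i + q' j = q i + q j)
    (hprod : q i * q j ≤ q' i * q' j) :
    multilinearRank n k q' ≤ multilinearRank n k q := by
  classical
  rw [mr_split n k i j hij q, mr_split n k i j hij q']
  refine Finset.sum_le_sum ?_
  intro T hT
  rw [mem_powerset] at hT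
  have hPQ : ((∏ t ∈ T, q' t) * ∏ t ∈ ((univ : Finset (Fin n)) \ {i, j}) \ T, (1 - q' t))
      = (∏ t ∈ T, q t) * ∏ t ∈ ((univ : Finset (Fin n)) \ {i, j}) \ T, (1 - q t) := by
    congr 1
    · refine Finset.prod_congr rfl fun t ht => ?_
      have hts := hT ht
      simp only [mem_sdiff, mem_univ, true_and, mem_insert, mem_singleton] at hts
      push_neg at hts
      exact hoff t hts.1 hts.2
    · refine Finset.prod_congr rfl fun t ht => ?_
      simp only [mem_sdiff, mem_univ, true_and, mem_insert, mem_singleton] at ht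
      push_neg at ht
      rw [hoff t ht.1.1 ht.1.2]
  rw [hPQ]
  have hw : 0 ≤ (∏ t ∈ T, q t) * ∏ t ∈ ((univ : Finset (Fin n)) \ {i, j}) \ T, (1 - q t) :=
    mul_nonneg (Finset.prod_nonneg fun t _ => h0 t)
      (Finset.prod_nonneg fun t _ => by linarith [h1 t])
  have habd : ((min T.card k : ℕ) : ℝ) + ((min (T.card + 2) k : ℕ) : ℝ)
      ≤ 2 * ((min (T.card + 1) k : ℕ) : ℝ) := by
    have : min T.card k + min (T.card + 2) k ≤ 2 * min (T.card + 1) k := by omega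
    exact_mod_cast this
  have := key_ineq ((min T.card k : ℕ) : ℝ) ((min (T.card + 1) k : ℕ) : ℝ)
    ((min (T.card + 2) k : ℕ) : ℝ)
    ((∏ t ∈ T, q t) * ∏ t ∈ ((univ : Finset (Fin n)) \ {i, j}) \ T, (1 - q t))
    (q i) (q j) (q' i) (q' j) hw habd hsum hprod
  calc ((∏ t ∈ T, q t) * ∏ t ∈ ((univ : Finset (Fin n)) \ {i, j}) \ T, (1 - q t)) *
      ( (min T.card k : ℕ) * ((1 - q' i) * (1 - q' j))
      + (min (T.card + 1) k : ℕ) * (q' j * (1 - q' i))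
      + (min (T.card + 1) k : ℕ) * (q' i * (1 - q' j))
      + (min (T.card + 2) k : ℕ) * (q' i * q' j) )
      = ((∏ t ∈ T, q t) * ∏ t ∈ ((univ : Finset (Fin n)) \ {i, j}) \ T, (1 - q t)) *
        ( (min T.card k : ℕ) * ((1 - q' i) * (1 - q' j))
        + (min (T.card + 1) k : ℕ) * (q' j * (1 - q' i))
        + (min (T.card + 1) k : ℕ) * (q' i * (1 - q' j))
        + (min (T.card + 2) k : ℕ) * (q' i * q' j) ) := rfl
    _ ≤ _ := by
        refine le_trans (le_of_eq (by ring)) (le_trans this (le_of_eq (by ring)))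
lemma mr_aux (n k : ℕ) (hk : 1 ≤ k) (hkn : k ≤ n) :
    ∀ m : ℕ, ∀ q : Fin n → ℝ, (∀ i, 0 ≤ q i) → (∀ i, q i ≤ 1) →
    (∑ i, q i = (k : ℝ)) →
    ((univ : Finset (Fin n)).filter (fun t => q t ≠ (k : ℝ) / n)).card ≤ m →
    multilinearRank n k (fun _ => (k : ℝ) / n) ≤ multilinearRank n k q := by
  classical
  have hn0 : 0 < n := lt_of_lt_of_le hk hkn
  have hnR : (0 : ℝ) < n := by exact_mod_cast hn0
  set c : ℝ := (k : ℝ) / n with hc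
  have hc0 : 0 < c := div_pos (by exact_mod_cast hk) hnR
  have hc1 : c ≤ 1 := by
    rw [hc, div_le_one hnR]; exact_mod_cast hkn
  have hsumc : ∑ _i : Fin n, c = (k : ℝ) := by
    rw [Finset.sum_const, card_univ, Fintype.card_fin, nsmul_eq_mul, hc]
    field_simp
  intro m
  induction m with
  | zero =>
    intro q hq0 hq1 hsum hcard
    have : ∀ t, q t = c := by
      intro t
      by_contra h
      have : t ∈ (univ : Finset (Fin n)).filter (fun t => q t ≠ c) := by
        simp [h]
      have := Finset.card_pos.mpr ⟨t, this⟩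
      omega
    have : q = fun _ => c := funext this
    rw [this]
  | succ m ih =>
    intro q hq0 hq1 hsum hcard
    by_cases hall : ∀ t, q t = c
    · rw [funext hall]
    · push_neg at hall
      obtain ⟨t0, ht0⟩ := hall
      -- there is a coordinate below the mean
      have hex_lt : ∃ i, q i < c := by
        by_contra h
        push_neg at h
        have : ∑ _i : Fin n, c < ∑ i, q i := by
          refine Finset.sum_lt_sum (fun i _ => h i) ⟨t0, mem_univ t0, ?_⟩
          exact lt_of_le_of_ne (h t0) (Ne.symm ht0)
        rw [hsumc, hsum] at this
        exact lt_irrefl _ this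
      have hex_gt : ∃ j, c < q j := by
        by_contra h
        push_neg at h
        have : ∑ i, q i < ∑ _i : Fin n, c := by
          refine Finset.sum_lt_sum (fun i _ => h i) ⟨t0, mem_univ t0, ?_⟩
          exact lt_of_le_of_ne (h t0) ht0
        rw [hsumc, hsum] at this
        exact lt_irrefl _ this
      obtain ⟨i, hi⟩ := hex_lt
      obtain ⟨j, hj⟩ := hex_gt
      have hij : i ≠ j := by
        intro h; rw [h] at hi; linarith
      set q' : Fin n → ℝ :=
        Function.update (Function.update q i c) j (q i + q j - c) with hq'
      have hq'i : q' i = c := by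
        rw [hq', Function.update_of_ne hij, Function.update_self]
      have hq'j : q' j = q i + q j - c := by
        rw [hq', Function.update_self]
      have hq'off : ∀ t, t ≠ i → t ≠ j → q' t = q t := by
        intro t hti htj
        rw [hq', Function.update_of_ne htj, Function.update_of_ne hti]
      have hq'0 : ∀ t, 0 ≤ q' t := by
        intro t
        by_cases hti : t = i
        · rw [hti, hq'i]; linarith
        · by_cases htj : t = j
          · rw [htj, hq'j]; linarith [hq0 i]
          · rw [hq'off t hti htj]; exact hq0 t
      have hq'1 : ∀ t, q' t ≤ 1 := by
        intro t
        by_cases hti : t = i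
        · rw [hti, hq'i]; linarith
        · by_cases htj : t = j
          · rw [htj, hq'j]; linarith [hq1 j]
          · rw [hq'off t hti htj]; exact hq1 t
      have hq'sum : ∑ t, q' t = (k : ℝ) := by
        have h1 : ∑ t, q' t = q' j + ∑ t ∈ univ.erase j, q' t :=
          (Finset.add_sum_erase univ q' (mem_univ j)).symm
        have h2 : ∑ t ∈ univ.erase j, q' t = q' i + ∑ t ∈ (univ.erase j).erase i, q' t :=
          (Finset.add_sum_erase _ q' (by simp [hij])).symm
        have h3 : ∑ t, q t = q j + ∑ t ∈ univ.erase j, q t :=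
          (Finset.add_sum_erase univ q (mem_univ j)).symm
        have h4 : ∑ t ∈ univ.erase j, q t = q i + ∑ t ∈ (univ.erase j).erase i, q t :=
          (Finset.add_sum_erase _ q (by simp [hij])).symm
        have h5 : ∑ t ∈ (univ.erase j).erase i, q' t = ∑ t ∈ (univ.erase j).erase i, q t := by
          refine Finset.sum_congr rfl fun t ht => ?_
          simp only [mem_erase] at ht
          exact hq'off t ht.1 ht.2.1
        rw [h1, h2, h5, hq'i, hq'j]
        rw [h3, h4] at hsum
        linarith
      have hcard' : ((univ : Finset (Fin n)).filter (fun t => q' t ≠ c)).card ≤ m := by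
        have hsub : (univ : Finset (Fin n)).filter (fun t => q' t ≠ c)
            ⊆ ((univ : Finset (Fin n)).filter (fun t => q t ≠ c)).erase i := by
          intro t ht
          simp only [mem_filter, mem_univ, true_and] at ht
          have hti : t ≠ i := by
            intro h; rw [h, hq'i] at ht; exact ht rfl
          simp only [mem_erase, mem_filter, mem_univ, true_and]
          refine ⟨hti, ?_⟩
          by_cases htj : t = j
          · rw [htj]; intro h; rw [h] at hj; exact lt_irrefl _ hj
          · rw [hq'off t hti htj] at ht; exact ht
        have hiMem : i ∈ (univ : Finset (Fin n)).filter (fun t => q t ≠ c) := by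
          simp only [mem_filter, mem_univ, true_and]
          intro h; rw [h] at hi; exact lt_irrefl _ hi
        have := Finset.card_le_card hsub
        rw [Finset.card_erase_of_mem hiMem] at this
        omega
      have step1 : multilinearRank n k (fun _ => c) ≤ multilinearRank n k q' :=
        ih q' hq'0 hq'1 hq'sum hcard'
      have step2 : multilinearRank n k q' ≤ multilinearRank n k q := by
        refine mr_transfer n k i j hij q q' hq'off hq0 hq1 ?_ ?_
        · rw [hq'i, hq'j]; ring
        · rw [hq'i, hq'j]
          nlinarith
      exact le_trans step1 step2

/-- Among all probability vectors with coordinate sum `k`, the uniform vector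
`(k/n, …, k/n)` minimizes the multilinear extension of `S ↦ min(|S|, k)`. -/
theorem uniform_minimizes_multilinear (n k : ℕ) (hk : 1 ≤ k) (hkn : k ≤ n)
    (q : Fin n → ℝ) (hq0 : ∀ i, 0 ≤ q i) (hq1 : ∀ i, q i ≤ 1)
    (hsum : ∑ i, q i = (k : ℝ)) :
    multilinearRank n k (fun _ => (k : ℝ) / n) ≤ multilinearRank n k q := by
  classical
  exact mr_aux n k hk hkn
    ((univ : Finset (Fin n)).filter (fun t => q t ≠ (k : ℝ) / n)).card
    q hq0 hq1 hsum le_rfl
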